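/- Let M = [[1-a, b],[c(2-a), bc+d]] with a ∈ (0,1), b, c ≥ 0, d ∈ (0,1). If a < 1 - d, a(1-d) > (7+2d)·bc, and a > bc, then the spectral radius of M satisfies ρ(M) < 1 - (a - bc)/2 < 1. -/
import Mathlib

theorem stmt15 (a b c d : ℝ) (ha0 : 0 < a) (ha1 : a < 1) (hb : 0 ≤ b) (hc : 0 ≤ c)
    (hd0 : 0 < d) (hd1 : d < 1)
    (h1 : a < 1 - d) (h2 : (7 + 2 * d) * (b * c) < a * (1 - d)) (h3 : b * c < a)
    (M : Matrix (Fin 2) (Fin 2) ℝ)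
    (hM : M = !![1 - a, b; c * (2 - a), b * c + d]) :
    (∀ lam ∈ spectrum ℝ M, |lam| < 1 - (a - b * c) / 2) ∧ 1 - (a - b * c) / 2 < 1 := by
  have he : 0 ≤ b * c := mul_nonneg hb hc
  have he7 : b * c < 1 / 7 := by nlinarith [mul_nonneg (le_of_lt hd0) he]
  refine ⟨?_, by linarith⟩
  intro lam hlam
  subst hM
  rw [spectrum.mem_iff, Matrix.isUnit_iff_isUnit_det, isUnit_iff_ne_zero, not_not] at hlam
  simp [Matrix.det_fin_two, Matrix.algebraMap_matrix_apply] at hlam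
  rw [abs_lt]
  constructor
  · by_contra h
    push_neg at h
    -- lam ≤ -(1 - (a - b*c)/2)
    nlinarith [hlam, mul_nonneg (by linarith : (0:ℝ) ≤ -(1 - (a - b*c)/2) - lam)
        (by linarith : (0:ℝ) ≤ (1 - (a - b*c)/2) + ((1-a)+(b*c+d)) - lam),
      mul_pos (by linarith : (0:ℝ) < 1 - a) hd0]
  · by_contra h
    push_neg at h
    nlinarith [hlam, mul_nonneg (by linarith : (0:ℝ) ≤ lam - (1 - (a - b*c)/2))
        (by linarith : (0:ℝ) ≤ lam + (1 - (a - b*c)/2) - ((1-a)+(b*c+d))),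
      mul_nonneg he (by linarith : (0:ℝ) ≤ 2*a - b*c),
      mul_lt_mul_of_pos_left h1 ha0, mul_nonneg (le_of_lt hd0) he]
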